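/- arXiv:1203.1998 — 3 statements merged into one kernel-verified Lean document; each statement's English description precedes it below -/
import Mathlib

section
/- For all t ∈ (0, a] and α > 1, one has α·e^{-2a²} ≤ (1 - e^{-2t²})/(1 - e^{-2t²/α}) ≤ α. -/
theorem stmt_1 (a α t : ℝ) (ha : 0 < a) (hα : 1 < α) (ht : t ∈ Set.Ioc 0 a) :
    α * Real.exp (-2 * a ^ 2) ≤ (1 - Real.exp (-2 * t ^ 2)) / (1 - Real.exp (-2 * t ^ 2 / α)) ∧
    (1 - Real.exp (-2 * t ^ 2)) / (1 - Real.exp (-2 * t ^ 2 / α)) ≤ α := by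
  obtain ⟨ht0, hta⟩ := ht
  have hα0 : (0:ℝ) < α := lt_trans one_pos hα
  set x : ℝ := 2 * t ^ 2 with hx
  have hx0 : 0 < x := by positivity
  have hxa : x ≤ 2 * a ^ 2 := by nlinarith
  have hden : 0 < 1 - Real.exp (-x / α) := by
    have : Real.exp (-x / α) < 1 :=
      Real.exp_lt_one_iff.mpr (div_neg_of_neg_of_pos (neg_neg_of_pos hx0) hα0)
    linarith
  have hrw : -2 * t ^ 2 = -x := by ring
  rw [hrw]
  constructor
  · -- lower bound
    rw [le_div_iff₀ hden]
    have h1 : 1 - Real.exp (-x / α) ≤ x / α := by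
      rw [neg_div]
      linarith [Real.add_one_le_exp (-(x / α))]
    have h2 : x * Real.exp (-x) ≤ 1 - Real.exp (-x) := by
      have hprod : Real.exp x * Real.exp (-x) = 1 := by rw [← Real.exp_add]; simp
      nlinarith [Real.add_one_le_exp x, Real.exp_pos (-x)]
    have h3 : Real.exp (-2 * a ^ 2) ≤ Real.exp (-x) := by
      apply Real.exp_le_exp.mpr; linarith
    calc α * Real.exp (-2 * a ^ 2) * (1 - Real.exp (-x / α))
        ≤ α * Real.exp (-2 * a ^ 2) * (x / α) := by
          apply mul_le_mul_of_nonneg_left h1 (by positivity)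
      _ = x * Real.exp (-2 * a ^ 2) := by field_simp
      _ ≤ x * Real.exp (-x) := mul_le_mul_of_nonneg_left h3 hx0.le
      _ ≤ 1 - Real.exp (-x) := h2
  · -- upper bound
    rw [div_le_iff₀ hden]
    -- Bernoulli: with s = exp(-x/α) - 1
    have hs : -1 ≤ Real.exp (-x / α) - 1 := by linarith [Real.exp_pos (-x / α)]
    have hb := one_add_mul_self_le_rpow_one_add hs hα.le
    have heq : (1 + (Real.exp (-x / α) - 1)) ^ α = Real.exp (-x) := by
      rw [show 1 + (Real.exp (-x / α) - 1) = Real.exp (-x / α) by ring,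
        ← Real.exp_mul]
      congr 1; field_simp
    rw [heq] at hb
    nlinarith
end

section
/- For C > 0, a > 0, α > 1, t ∈ (0, a], and x, y ∈ R^n: exp(-C·|e^{-t²/α}x - y|²/(1 - e^{-2t²/α})) ≤ exp(-C·(α/(2e^{2a²}))·|e^{-t²}x - y|²/(1 - e^{-2t²})) · exp(C·t⁴|x|²/(1 - e^{-2t²/α})). -/
set_option maxHeartbeats 1000000 in
theorem stmt_4 {n : ℕ} (C a α t : ℝ) (hC : 0 < C) (ha : 0 < a) (hα : 1 < α)
    (ht : t ∈ Set.Ioc 0 a) (x y : EuclideanSpace ℝ (Fin n)) :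
    Real.exp (-C * ‖Real.exp (-t ^ 2 / α) • x - y‖ ^ 2 / (1 - Real.exp (-2 * t ^ 2 / α))) ≤
      Real.exp (-C * (α / (2 * Real.exp (2 * a ^ 2))) *
          ‖Real.exp (-t ^ 2) • x - y‖ ^ 2 / (1 - Real.exp (-2 * t ^ 2))) *
        Real.exp (C * t ^ 4 * ‖x‖ ^ 2 / (1 - Real.exp (-2 * t ^ 2 / α))) := by
  obtain ⟨ht0, hta⟩ := ht
  have hα0 : (0:ℝ) < α := lt_trans one_pos hα
  have ht2 : (0:ℝ) < t ^ 2 := by positivity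
  have hta2 : t ^ 2 ≤ a ^ 2 := by nlinarith
  rw [← Real.exp_add, Real.exp_le_exp]
  set A := ‖Real.exp (-t ^ 2 / α) • x - y‖ with hAdef
  set B := ‖Real.exp (-t ^ 2) • x - y‖ with hBdef
  set X := ‖x‖ with hXdef
  have hA0 : 0 ≤ A := norm_nonneg _
  have hB0 : 0 ≤ B := norm_nonneg _
  have hX0 : 0 ≤ X := norm_nonneg _
  clear_value A B X
  have hD1 : 0 < 1 - Real.exp (-2 * t ^ 2 / α) := by
    have : Real.exp (-2 * t ^ 2 / α) < 1 := by
      rw [Real.exp_lt_one_iff]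
      apply div_neg_of_neg_of_pos _ hα0; nlinarith
    linarith
  have hD2 : 0 < 1 - Real.exp (-2 * t ^ 2) := by
    have : Real.exp (-2 * t ^ 2) < 1 := by
      rw [Real.exp_lt_one_iff]; nlinarith
    linarith
  -- Bernoulli-based kernel ratio bound
  have hu : (1:ℝ) ≤ Real.exp (2 * t ^ 2 / α) := Real.one_le_exp (by positivity)
  have hbern : 1 + α * (Real.exp (2 * t ^ 2 / α) - 1) ≤ Real.exp (2 * t ^ 2) := by
    have := one_add_mul_self_le_rpow_one_add
      (show (-1:ℝ) ≤ Real.exp (2 * t ^ 2 / α) - 1 by linarith) (le_of_lt hα)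
    have hpow : (1 + (Real.exp (2 * t ^ 2 / α) - 1)) ^ α = Real.exp (2 * t ^ 2) := by
      have h1 : (1 + (Real.exp (2 * t ^ 2 / α) - 1)) = Real.exp (2 * t ^ 2 / α) := by ring
      rw [h1, ← Real.exp_log (Real.exp_pos (2 * t ^ 2 / α)), Real.log_exp,
        ← Real.exp_mul]
      congr 1
      field_simp
    rw [hpow] at this
    linarith [this]
  have hUu : Real.exp (2 * t ^ 2) ≤ Real.exp (2 * t ^ 2 / α) * Real.exp (2 * a ^ 2) := by
    rw [← Real.exp_add, Real.exp_le_exp]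
    have h1 : 0 ≤ 2 * t ^ 2 / α := by positivity
    linarith
  have hinv1 : Real.exp (-2 * t ^ 2 / α) = (Real.exp (2 * t ^ 2 / α))⁻¹ := by
    rw [← Real.exp_neg]; congr 1; ring
  have hinv2 : Real.exp (-2 * t ^ 2) = (Real.exp (2 * t ^ 2))⁻¹ := by
    rw [← Real.exp_neg]; congr 1; ring
  have hupos : 0 < Real.exp (2 * t ^ 2 / α) := Real.exp_pos _
  have hUpos : 0 < Real.exp (2 * t ^ 2) := Real.exp_pos _
  have hEpos : 0 < Real.exp (2 * a ^ 2) := Real.exp_pos _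
  have key1 : α / Real.exp (2 * a ^ 2) * (1 - Real.exp (-2 * t ^ 2 / α)) ≤
      1 - Real.exp (-2 * t ^ 2) := by
    rw [hinv1, hinv2]
    rw [div_mul_eq_mul_div, div_le_iff₀ hEpos]
    set u := Real.exp (2 * t ^ 2 / α)
    set U := Real.exp (2 * t ^ 2)
    have h1 : 1 - u⁻¹ = (u - 1) / u := by field_simp
    have h2 : 1 - U⁻¹ = (U - 1) / U := by field_simp
    rw [h1, h2, mul_div_assoc', div_mul_eq_mul_div, div_le_div_iff₀ hupos hUpos]
    -- α (u-1) U ≤ (U-1) E u ; from α(u-1) ≤ U-1 and U ≤ u E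
    have hU1 : 1 ≤ U := by nlinarith
    nlinarith [mul_le_mul_of_nonneg_left hUu (show 0 ≤ U - 1 by linarith),
      mul_le_mul_of_nonneg_right hbern hUpos.le]
  -- norm bound
  have hdelta : 0 ≤ Real.exp (-t ^ 2 / α) - Real.exp (-t ^ 2) ∧
      Real.exp (-t ^ 2 / α) - Real.exp (-t ^ 2) ≤ t ^ 2 := by
    constructor
    · have h := div_le_self ht2.le hα.le
      have : Real.exp (-t ^ 2) ≤ Real.exp (-t ^ 2 / α) := by
        rw [Real.exp_le_exp, neg_div]
        linarith
      linarith
    · have h1 : Real.exp (-t ^ 2 / α) ≤ 1 := Real.exp_le_one_iff.mpr (by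
        apply div_nonpos_of_nonpos_of_nonneg <;> nlinarith)
      have h2 : 1 - t ^ 2 ≤ Real.exp (-t ^ 2) := by
        have := Real.add_one_le_exp (-t ^ 2); linarith
      linarith
  have key2 : B ^ 2 / 2 - t ^ 4 * X ^ 2 ≤ A ^ 2 := by
    have hBle : B ≤ A + (Real.exp (-t ^ 2 / α) - Real.exp (-t ^ 2)) * X := by
      have heq : Real.exp (-t ^ 2) • x - y =
          (Real.exp (-t ^ 2 / α) • x - y) -
            (Real.exp (-t ^ 2 / α) - Real.exp (-t ^ 2)) • x := by
        rw [sub_smul]; abel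
      rw [hAdef, hBdef, hXdef, heq]
      refine le_trans (norm_sub_le _ _) ?_
      rw [norm_smul, Real.norm_eq_abs, abs_of_nonneg hdelta.1]
    obtain ⟨hd0, hdt⟩ := hdelta
    nlinarith [sq_nonneg (A - (Real.exp (-t ^ 2 / α) - Real.exp (-t ^ 2)) * X),
      mul_nonneg hd0 hX0, sq_nonneg X, sq_nonneg t,
      mul_le_mul_of_nonneg_right hdt hX0]
  -- final assembly
  have step1' : C * (α / (2 * Real.exp (2 * a ^ 2))) * B ^ 2 / (1 - Real.exp (-2 * t ^ 2)) ≤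
      C * (B ^ 2 / 2) / (1 - Real.exp (-2 * t ^ 2 / α)) := by
    rw [div_le_div_iff₀ hD2 hD1]
    have hk := mul_le_mul_of_nonneg_left key1 (show 0 ≤ C * B ^ 2 / 2 by positivity)
    calc C * (α / (2 * Real.exp (2 * a ^ 2))) * B ^ 2 * (1 - Real.exp (-2 * t ^ 2 / α))
        = C * B ^ 2 / 2 * (α / Real.exp (2 * a ^ 2) * (1 - Real.exp (-2 * t ^ 2 / α))) := by
          field_simp
      _ ≤ C * B ^ 2 / 2 * (1 - Real.exp (-2 * t ^ 2)) := hk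
      _ = C * (B ^ 2 / 2) * (1 - Real.exp (-2 * t ^ 2)) := by ring
  have step2 : -C * A ^ 2 / (1 - Real.exp (-2 * t ^ 2 / α)) ≤
      -(C * (B ^ 2 / 2)) / (1 - Real.exp (-2 * t ^ 2 / α)) +
        C * t ^ 4 * X ^ 2 / (1 - Real.exp (-2 * t ^ 2 / α)) := by
    rw [← add_div, div_le_div_iff_of_pos_right hD1]
    nlinarith [mul_le_mul_of_nonneg_left key2 hC.le]
  refine le_trans step2 ?_
  have h := neg_le_neg step1'
  rw [show -C * (α / (2 * Real.exp (2 * a ^ 2))) * B ^ 2 / (1 - Real.exp (-2 * t ^ 2)) =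
        -(C * (α / (2 * Real.exp (2 * a ^ 2))) * B ^ 2 / (1 - Real.exp (-2 * t ^ 2))) from by
      ring,
    show -(C * (B ^ 2 / 2)) / (1 - Real.exp (-2 * t ^ 2 / α)) =
        -(C * (B ^ 2 / 2) / (1 - Real.exp (-2 * t ^ 2 / α))) from by ring]
  exact add_le_add_left h _
end

section
/- For every N ≥ 0 there exists a polynomial P_N in 2n+1 variables such that for all x, y ∈ R^n and s > 0, the N-th s-derivative of the Mehler kernel M_s(x,y) equals (1 - e^{-2s})^{-N}·P_N(e^{-s}, ((e^{-s}x_j - y_j)/√(1-e^{-2s}))_{j=1..n}, (√(1-e^{-2s})·x_j)_{j=1..n})·M_s(x,y). -/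
noncomputable def mehler (n : ℕ) (t : ℝ) (x y : EuclideanSpace ℝ (Fin n)) : ℝ :=
  Real.pi ^ (-(n : ℝ) / 2) * (1 - Real.exp (-2 * t)) ^ (-(n : ℝ) / 2) *
    Real.exp (-‖Real.exp (-t) • x - y‖ ^ 2 / (1 - Real.exp (-2 * t)))

open MvPolynomial Real

lemma hasDerivAt_eval_poly {σ : Type*} [Fintype σ] [DecidableEq σ] {g : ℝ → σ → ℝ}
    {g' : σ → ℝ} {s : ℝ} (hg : ∀ i, HasDerivAt (fun t => g t i) (g' i) s)
    (P : MvPolynomial σ ℝ) :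
    HasDerivAt (fun t => eval (g t) P) (∑ i, eval (g s) (pderiv i P) * g' i) s := by
  induction P using MvPolynomial.induction_on with
  | C a => simpa using hasDerivAt_const s a
  | add p q hp hq =>
      simpa [mul_add, add_mul, Finset.sum_add_distrib] using hp.fun_add hq
  | mul_X p i hp =>
      have h2 := hp.fun_mul (hg i)
      have heq : (fun t => eval (g t) (p * X i)) = fun t => eval (g t) p * g t i := by
        ext t; simp
      rw [heq]
      convert h2 using 1 <;> try rfl
      simp only [pderiv_mul, pderiv_X, eval_add, eval_mul, eval_X, Pi.single_apply,
        Finset.sum_add_distrib, add_mul, apply_ite (eval (g s)), map_zero, map_one,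
        mul_ite, mul_one, mul_zero, ite_mul, zero_mul, Finset.sum_ite_eq,
        Finset.mem_univ, if_true]
      rw [Finset.sum_mul]
      congr 1
      exact Finset.sum_congr rfl fun j _ => by ring


noncomputable section MehlerAux

abbrev σn (n : ℕ) := Unit ⊕ Fin n ⊕ Fin n

def uvar (n : ℕ) : σn n := Sum.inl ()
def vvar (n : ℕ) (j : Fin n) : σn n := Sum.inr (Sum.inl j)
def wvar (n : ℕ) (j : Fin n) : σn n := Sum.inr (Sum.inr j)

def qp (n : ℕ) : σn n → MvPolynomial (σn n) ℝ
  | Sum.inl _ => -(X (uvar n) * (1 - X (uvar n) ^ 2))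
  | Sum.inr (Sum.inl j) => -(X (uvar n) * X (wvar n j)) - X (uvar n) ^ 2 * X (vvar n j)
  | Sum.inr (Sum.inr j) => X (uvar n) ^ 2 * X (wvar n j)

def Dop (n : ℕ) (P : MvPolynomial (σn n) ℝ) : MvPolynomial (σn n) ℝ :=
  ∑ i, pderiv i P * qp n i

def Rpoly (n : ℕ) : MvPolynomial (σn n) ℝ :=
  C (-(n : ℝ)) * X (uvar n) ^ 2 +
    ∑ j : Fin n, 2 * X (vvar n j) *
      (X (uvar n) * X (wvar n j) + X (uvar n) ^ 2 * X (vvar n j))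

def nextP (n N : ℕ) (P : MvPolynomial (σn n) ℝ) : MvPolynomial (σn n) ℝ :=
  C (-2 * (N : ℝ)) * X (uvar n) ^ 2 * P + Dop n P + P * Rpoly n

def gfun (n : ℕ) (x y : EuclideanSpace ℝ (Fin n)) (s : ℝ) : σn n → ℝ :=
  Sum.elim (fun _ : Unit => Real.exp (-s))
    (Sum.elim
      (fun j : Fin n => (Real.exp (-s) * x j - y j) / Real.sqrt (1 - Real.exp (-2 * s)))
      (fun j : Fin n => Real.sqrt (1 - Real.exp (-2 * s)) * x j))

variable {n : ℕ} {x y : EuclideanSpace ℝ (Fin n)} {s : ℝ}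

lemma hA0 (hs : 0 < s) : 0 < 1 - Real.exp (-2 * s) := by
  have : Real.exp (-2 * s) < 1 := Real.exp_lt_one_iff.mpr (by linarith)
  linarith

lemma he2 : Real.exp (-2 * s) = Real.exp (-s) ^ 2 := by
  rw [show (-2 : ℝ) * s = -s + -s by ring, Real.exp_add, sq]

lemma hE : HasDerivAt (fun t : ℝ => Real.exp (-t)) (-Real.exp (-s)) s := by
  simpa using ((hasDerivAt_id s).neg).exp

lemma hA : HasDerivAt (fun t : ℝ => 1 - Real.exp (-2 * t)) (2 * Real.exp (-2 * s)) s := by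
  have h := (((hasDerivAt_id s).const_mul (-2 : ℝ)).exp).const_sub 1
  convert h using 1 <;> try rfl
  simp only [id_eq]
  ring

lemma hSqrtA (hs : 0 < s) :
    HasDerivAt (fun t : ℝ => Real.sqrt (1 - Real.exp (-2 * t)))
      (2 * Real.exp (-2 * s) / (2 * Real.sqrt (1 - Real.exp (-2 * s)))) s :=
  hA.sqrt (hA0 hs).ne'

lemma coord_deriv (hs : 0 < s) (i : σn n) :
    HasDerivAt (fun t => gfun n x y t i)
      ((1 - Real.exp (-2 * s))⁻¹ * eval (gfun n x y s) (qp n i)) s := by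
  have hA0' := hA0 (s := s) hs
  have ha : 0 < Real.sqrt (1 - Real.exp (-2 * s)) := Real.sqrt_pos.mpr hA0'
  have ha2 : Real.sqrt (1 - Real.exp (-2 * s)) ^ 2 = 1 - Real.exp (-2 * s) :=
    Real.sq_sqrt hA0'.le
  have hA2 : 1 - Real.exp (-s) ^ 2 ≠ 0 := by rw [← he2]; exact hA0'.ne'
  obtain i | j | j := i
  · -- u variable
    convert hE using 1 <;> try rfl
    simp only [qp, gfun, uvar, eval_neg, eval_mul, eval_X, eval_sub, eval_pow, map_one,
      Sum.elim_inl]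
    rw [he2]
    field_simp
  · -- v variable
    have h := ((hE.mul_const (x j)).sub_const (y j)).fun_div (hSqrtA hs) ha.ne'
    convert h using 1 <;> try rfl
    simp only [qp, gfun, uvar, vvar, wvar, eval_sub, eval_neg, eval_mul, eval_X, eval_pow,
      Sum.elim_inl, Sum.elim_inr]
    set a := Real.sqrt (1 - Real.exp (-2 * s)) with hadef
    rw [he2] at ha2 ⊢
    rw [← ha2]
    field_simp
    try ring
  · -- w variable
    have h := (hSqrtA hs).mul_const (x j)
    convert h using 1 <;> try rfl
    simp only [qp, gfun, uvar, wvar, eval_mul, eval_X, eval_pow, Sum.elim_inl, Sum.elim_inr]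
    set a := Real.sqrt (1 - Real.exp (-2 * s)) with hadef
    rw [he2] at ha2 ⊢
    rw [← ha2]
    field_simp
    try ring

end MehlerAux

noncomputable section MehlerAux2
open MvPolynomial Real


variable {n : ℕ} {x y : EuclideanSpace ℝ (Fin n)} {s : ℝ}

lemma mehler_eq (n : ℕ) (x y : EuclideanSpace ℝ (Fin n)) (t : ℝ) :
    mehler n t x y = Real.pi ^ (-(n : ℝ) / 2) * (1 - Real.exp (-2 * t)) ^ (-(n : ℝ) / 2) *
      Real.exp (-((∑ j, (Real.exp (-t) * x j - y j) ^ 2) / (1 - Real.exp (-2 * t)))) := by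
  unfold mehler
  have hn : ‖Real.exp (-t) • x - y‖ ^ 2 = ∑ j, (Real.exp (-t) * x j - y j) ^ 2 := by
    rw [EuclideanSpace.norm_eq, Real.sq_sqrt (by positivity)]
    exact Finset.sum_congr rfl fun j _ => by
      simp [PiLp.sub_apply, PiLp.smul_apply, smul_eq_mul, Real.norm_eq_abs, sq_abs]
  rw [hn, neg_div (1 - Real.exp (-2 * t)) (∑ j, (Real.exp (-t) * x j - y j) ^ 2)]

lemma hQderiv :
    HasDerivAt (fun t => ∑ j, (Real.exp (-t) * x j - y j) ^ 2)
      (∑ j, 2 * (Real.exp (-s) * x j - y j) * (-Real.exp (-s) * x j)) s := by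
  apply HasDerivAt.fun_sum
  intro j _
  have h := (((hE (s := s)).mul_const (x j)).sub_const (y j)).fun_pow 2
  convert h using 1 <;> try rfl
  push_cast
  ring

lemma hevalR (hs : 0 < s) :
    eval (gfun n x y s) (Rpoly n) =
      -(n : ℝ) * Real.exp (-s) ^ 2 +
        2 * Real.exp (-s) * (∑ j, (Real.exp (-s) * x j - y j) * x j) +
        2 * Real.exp (-s) ^ 2 * (∑ j, (Real.exp (-s) * x j - y j) ^ 2) /
          (1 - Real.exp (-2 * s)) := by
  have hA0' := hA0 (s := s) hs
  have ha : 0 < Real.sqrt (1 - Real.exp (-2 * s)) := Real.sqrt_pos.mpr hA0'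
  have ha2 : Real.sqrt (1 - Real.exp (-2 * s)) ^ 2 = 1 - Real.exp (-2 * s) :=
    Real.sq_sqrt hA0'.le
  simp only [Rpoly, map_add, map_sum, map_mul, eval_C, eval_X, eval_pow, map_ofNat,
    gfun, uvar, vvar, wvar, Sum.elim_inl, Sum.elim_inr]
  rw [add_assoc]
  congr 1
  have hterm : ∀ j : Fin n,
      2 * ((Real.exp (-s) * x j - y j) / Real.sqrt (1 - Real.exp (-2 * s))) *
        (Real.exp (-s) * (Real.sqrt (1 - Real.exp (-2 * s)) * x j) +
          Real.exp (-s) ^ 2 * ((Real.exp (-s) * x j - y j) / Real.sqrt (1 - Real.exp (-2 * s)))) =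
      2 * Real.exp (-s) * ((Real.exp (-s) * x j - y j) * x j) +
        2 * Real.exp (-s) ^ 2 * (Real.exp (-s) * x j - y j) ^ 2 / (1 - Real.exp (-2 * s)) := by
    intro j
    set a := Real.sqrt (1 - Real.exp (-2 * s)) with hadef
    rw [← ha2]
    field_simp
    try ring
  rw [Finset.sum_congr rfl fun j _ => hterm j, Finset.sum_add_distrib, ← Finset.mul_sum,
    ← Finset.sum_div, ← Finset.mul_sum]

end MehlerAux2

noncomputable section MehlerAux3
open MvPolynomial Real

variable {n : ℕ} {x y : EuclideanSpace ℝ (Fin n)} {s : ℝ}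

lemma hMderiv (hs : 0 < s) :
    HasDerivAt (fun t => mehler n t x y)
      ((1 - Real.exp (-2 * s))⁻¹ * eval (gfun n x y s) (Rpoly n) * mehler n s x y) s := by
  have hA0' := hA0 (s := s) hs
  have hrpow := (hA (s := s)).rpow_const (p := -(n : ℝ)/2) (Or.inl hA0'.ne')
  have hexp := (((hQderiv (x := x) (y := y) (s := s)).fun_div (hA (s := s)) hA0'.ne').fun_neg).exp
  have htot := (hrpow.const_mul (Real.pi ^ (-(n : ℝ)/2))).fun_mul hexp
  rw [show (fun t => mehler n t x y) = fun t =>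
      Real.pi ^ (-(n : ℝ)/2) * (1 - Real.exp (-2*t)) ^ (-(n : ℝ)/2) *
        Real.exp (-((∑ j, (Real.exp (-t) * x j - y j)^2) / (1 - Real.exp (-2*t)))) from
    funext fun t => mehler_eq n x y t]
  rw [mehler_eq n x y s, hevalR hs]
  convert htot using 1 <;> try rfl
  rw [show (∑ j, 2 * (Real.exp (-s) * x j - y j) * (-Real.exp (-s) * x j)) =
      -2 * Real.exp (-s) * (∑ j, (Real.exp (-s) * x j - y j) * x j) from by
    rw [Finset.mul_sum]; exact Finset.sum_congr rfl fun j _ => by ring]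
  rw [Real.rpow_sub hA0', Real.rpow_one]
  set e := Real.exp (-s)
  set A := 1 - Real.exp (-2 * s)
  set S := ∑ j, (e * x j - y j) * x j
  set Q := ∑ j, (e * x j - y j) ^ 2
  set c := Real.pi ^ (-(n : ℝ)/2)
  set B := A ^ (-(n : ℝ)/2)
  set G := Real.exp (-Q / A)
  have he2' : Real.exp (-2 * s) = e ^ 2 := he2
  rw [he2'] -- replace remaining exp(-2s)
  field_simp
  ring

end MehlerAux3

noncomputable section MehlerAux4
open MvPolynomial Real

variable {n : ℕ} {x y : EuclideanSpace ℝ (Fin n)} {s : ℝ}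

lemma hPeval (hs : 0 < s) (P : MvPolynomial (σn n) ℝ) :
    HasDerivAt (fun t => eval (gfun n x y t) P)
      ((1 - Real.exp (-2 * s))⁻¹ * eval (gfun n x y s) (Dop n P)) s := by
  have h := hasDerivAt_eval_poly
    (g := gfun n x y)
    (g' := fun i => (1 - Real.exp (-2 * s))⁻¹ * eval (gfun n x y s) (qp n i))
    (fun i => coord_deriv hs i) P
  convert h using 1 <;> try rfl
  simp only [Dop, map_sum, eval_mul, Finset.mul_sum]
  exact Finset.sum_congr rfl fun i _ => by ring

lemma step (hs : 0 < s) (N : ℕ) (P : MvPolynomial (σn n) ℝ) :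
    HasDerivAt
      (fun t => (1 - Real.exp (-2 * t))⁻¹ ^ N * eval (gfun n x y t) P * mehler n t x y)
      ((1 - Real.exp (-2 * s))⁻¹ ^ (N + 1) * eval (gfun n x y s) (nextP n N P) *
        mehler n s x y) s := by
  have hA0' := hA0 (s := s) hs
  have hinv : HasDerivAt (fun t => (1 - Real.exp (-2 * t))⁻¹ ^ N)
      (-(2 * (N : ℝ) * Real.exp (-2 * s)) * ((1 - Real.exp (-2 * s))⁻¹) ^ (N + 1)) s := by
    have h := ((hA (s := s)).fun_inv hA0'.ne').fun_pow N
    convert h using 1 <;> try rfl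
    cases N with
    | zero => simp
    | succ m =>
        push_cast
        rw [pow_succ, pow_succ]
        field_simp
        try ring
  have h := (hinv.fun_mul (hPeval (x := x) (y := y) hs P)).fun_mul (hMderiv (n := n) (x := x) (y := y) hs)
  convert h using 1 <;> try rfl
  have hev : eval (gfun n x y s) (nextP n N P) =
      -2 * (N : ℝ) * Real.exp (-s) ^ 2 * eval (gfun n x y s) P +
        eval (gfun n x y s) (Dop n P) +
        eval (gfun n x y s) P * eval (gfun n x y s) (Rpoly n) := by
    simp only [nextP, map_add, eval_mul, eval_C, eval_pow, eval_X, gfun, uvar, Sum.elim_inl]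
    try ring
  rw [hev, he2 (s := s), pow_succ]
  ring

end MehlerAux4

theorem stmt_7 (n N : ℕ) :
    ∃ P : MvPolynomial (Unit ⊕ Fin n ⊕ Fin n) ℝ,
      ∀ (x y : EuclideanSpace ℝ (Fin n)) (s : ℝ), 0 < s →
        iteratedDeriv N (fun s => mehler n s x y) s =
          (1 - Real.exp (-2 * s))⁻¹ ^ N *
            MvPolynomial.eval
              (Sum.elim (fun _ : Unit => Real.exp (-s))
                (Sum.elim
                  (fun j : Fin n =>
                    (Real.exp (-s) * x j - y j) / Real.sqrt (1 - Real.exp (-2 * s)))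
                  (fun j : Fin n => Real.sqrt (1 - Real.exp (-2 * s)) * x j))) P *
            mehler n s x y := by
  induction N with
  | zero =>
      exact ⟨1, fun x y s hs => by simp [iteratedDeriv_zero]⟩
  | succ N ih =>
      obtain ⟨P, hP⟩ := ih
      refine ⟨nextP n N P, fun x y s hs => ?_⟩
      rw [iteratedDeriv_succ]
      have hev : deriv (iteratedDeriv N fun s => mehler n s x y) s =
          deriv (fun t => (1 - Real.exp (-2 * t))⁻¹ ^ N * eval (gfun n x y t) P *
            mehler n t x y) s := by
        apply Filter.EventuallyEq.deriv_eq
        filter_upwards [Ioi_mem_nhds hs] with t ht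
        exact hP x y t ht
      rw [hev, (step hs N P).deriv]
      rfl
end
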